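/- arXiv:2406.03252 — 2 statements merged into one kernel-verified Lean document; each statement's English description precedes it below -/
import Mathlib

section
/- Suppose integrable random variables (C_j) adapted to a filtration satisfy E[C_{j+1} | F_j] = F_j C_j and Var(C_{j+1} | F_j) = Σ_j² C_j with deterministic constants F_j > 0 and Σ_j² ≥ 0. Then for all s ≤ j: Var(C_j | F_s) = ( Σ_{k=s}^{j-1} (∏_{ℓ=k+1}^{j-1} F_ℓ²) Σ_k² (∏_{ℓ=s}^{k-1} F_ℓ) ) · C_s. -/
open MeasureTheory

/-- multi-step conditional variance in Mack's model.  If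
`E[C_{j+1} | 𝓕_j] = F_j C_j` and `Var(C_{j+1} | 𝓕_j) = Σ_j² C_j`
(i.e. `E[C_{j+1}² | 𝓕_j] = (F_j C_j)² + Σ_j² C_j`), then for all `s ≤ j`:
`Var(C_j | 𝓕_s) = (∑_{k=s}^{j-1} (∏_{ℓ=k+1}^{j-1} F_ℓ²) Σ_k² (∏_{ℓ=s}^{k-1} F_ℓ)) C_s`. -/
theorem mack_conditional_variance
    {Ω : Type*} {m0 : MeasurableSpace Ω} (μ : Measure Ω) [IsProbabilityMeasure μ]
    (ℱ : Filtration ℕ m0)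
    (C : ℕ → Ω → ℝ) (F : ℕ → ℝ) (S2 : ℕ → ℝ)
    (hF : ∀ j, 0 < F j) (hS2 : ∀ j, 0 ≤ S2 j)
    (hadapted : Adapted ℱ C)
    (hint : ∀ j, MemLp (C j) 2 μ)
    (hH2 : ∀ j, μ[C (j + 1) | ℱ j] =ᵐ[μ] fun ω => F j * C j ω)
    (hH3 : ∀ j, μ[fun ω => (C (j + 1) ω) ^ 2 | ℱ j] =ᵐ[μ]
      fun ω => (F j * C j ω) ^ 2 + S2 j * C j ω) :
    ∀ s j, s ≤ j →
      (fun ω => (μ[fun ω' => (C j ω') ^ 2 | ℱ s]) ω - ((μ[C j | ℱ s]) ω) ^ 2) =ᵐ[μ]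
        fun ω => (∑ k ∈ Finset.Ico s j,
          (∏ l ∈ Finset.Ico (k + 1) j, (F l) ^ 2) * S2 k * (∏ l ∈ Finset.Ico s k, F l)) *
          C s ω := by

  intro s j hsj
  have hCint : ∀ k, Integrable (C k) μ := fun k => (hint k).integrable one_le_two
  have hC2int : ∀ k, Integrable (fun ω => C k ω ^ 2) μ := fun k => (hint k).integrable_sq
  have key : ∀ j, s ≤ j →
      ((μ[C j | ℱ s]) =ᵐ[μ] fun ω => (∏ l ∈ Finset.Ico s j, F l) * C s ω) ∧
      ((μ[fun ω' => C j ω' ^ 2 | ℱ s]) =ᵐ[μ] fun ω =>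
        (∏ l ∈ Finset.Ico s j, (F l) ^ 2) * (C s ω) ^ 2 +
        (∑ k ∈ Finset.Ico s j,
          (∏ l ∈ Finset.Ico (k + 1) j, (F l) ^ 2) * S2 k * (∏ l ∈ Finset.Ico s k, F l)) *
          C s ω) := by
    intro j hsj
    induction j, hsj using Nat.le_induction with
    | base =>
      constructor
      · rw [condExp_of_stronglyMeasurable (ℱ.le s) (hadapted s).stronglyMeasurable (hCint s)]
        filter_upwards with ω
        simp
      · rw [condExp_of_stronglyMeasurable (ℱ.le s)
          (by exact ((hadapted s).pow_const 2).stronglyMeasurable) (hC2int s)]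
        filter_upwards with ω
        simp
    | succ j hsj ih =>
      obtain ⟨ihA, ihB⟩ := ih
      have htowA : μ[C (j + 1) | ℱ s] =ᵐ[μ] μ[fun ω => F j * C j ω | ℱ s] :=
        (condExp_condExp_of_le (ℱ.mono hsj) (ℱ.le j)).symm.trans (condExp_congr_ae (hH2 j))
      have hsmulA : μ[fun ω => F j * C j ω | ℱ s] =ᵐ[μ] fun ω => F j * (μ[C j | ℱ s]) ω := by
        have := condExp_smul (μ := μ) (m := ℱ s) (F j) (C j)
        filter_upwards [this] with ω hω using hω
      have condA : (μ[C (j + 1) | ℱ s]) =ᵐ[μ]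
          fun ω => (∏ l ∈ Finset.Ico s (j + 1), F l) * C s ω := by
        refine (htowA.trans hsmulA).trans ?_
        filter_upwards [ihA] with ω hω
        rw [hω, Finset.prod_Ico_succ_top hsj]
        ring
      refine ⟨condA, ?_⟩
      have htowB : μ[fun ω' => C (j + 1) ω' ^ 2 | ℱ s] =ᵐ[μ]
          μ[fun ω => (F j * C j ω) ^ 2 + S2 j * C j ω | ℱ s] :=
        (condExp_condExp_of_le (ℱ.mono hsj) (ℱ.le j)).symm.trans (condExp_congr_ae (hH3 j))
      have hint1 : Integrable (fun ω => (F j * C j ω) ^ 2) μ := by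
        have := ((hint j).const_mul (F j)).integrable_sq
        simpa using this
      have hint2 : Integrable (fun ω => S2 j * C j ω) μ := (hCint j).const_mul (S2 j)
      have hadd : μ[fun ω => (F j * C j ω) ^ 2 + S2 j * C j ω | ℱ s] =ᵐ[μ]
          fun ω => (μ[fun ω' => (F j * C j ω') ^ 2 | ℱ s]) ω
            + (μ[fun ω' => S2 j * C j ω' | ℱ s]) ω := condExp_add hint1 hint2 (ℱ s)
      have hsq : μ[fun ω' => (F j * C j ω') ^ 2 | ℱ s] =ᵐ[μ]
          fun ω => F j ^ 2 * (μ[fun ω' => C j ω' ^ 2 | ℱ s]) ω := by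
        have h1 := condExp_smul (μ := μ) (m := ℱ s) (F j ^ 2) (fun ω' => C j ω' ^ 2)
        have h2 : (fun ω' => (F j * C j ω') ^ 2) = (F j ^ 2) • (fun ω' => C j ω' ^ 2) := by
          funext ω'; simp [mul_pow, Pi.smul_apply, smul_eq_mul]
        rw [h2]
        filter_upwards [h1] with ω hω using hω
      have hlin : μ[fun ω' => S2 j * C j ω' | ℱ s] =ᵐ[μ]
          fun ω => S2 j * (μ[C j | ℱ s]) ω := by
        have := condExp_smul (μ := μ) (m := ℱ s) (S2 j) (C j)
        filter_upwards [this] with ω hω using hω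
      refine (htowB.trans hadd).trans ?_
      have hsum : (∑ k ∈ Finset.Ico s j,
            (∏ l ∈ Finset.Ico (k + 1) (j + 1), F l ^ 2) * S2 k * ∏ l ∈ Finset.Ico s k, F l)
          = F j ^ 2 * ∑ k ∈ Finset.Ico s j,
            (∏ l ∈ Finset.Ico (k + 1) j, F l ^ 2) * S2 k * ∏ l ∈ Finset.Ico s k, F l := by
        rw [Finset.mul_sum]
        exact Finset.sum_congr rfl fun k hk => by
          rw [Finset.prod_Ico_succ_top (Finset.mem_Ico.mp hk).2]; ring
      filter_upwards [hsq, hlin, ihA, ihB] with ω h1 h2 h3 h4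
      rw [h1, h2, h3, h4, Finset.prod_Ico_succ_top hsj,
        Finset.sum_Ico_succ_top hsj, hsum]
      simp only [Finset.Ico_self, Finset.prod_empty, one_mul]
      ring
  obtain ⟨hA, hB⟩ := key j hsj
  filter_upwards [hA, hB] with ω h1 h2
  rw [h1, h2, Finset.prod_pow]
  ring
end

section
/- Let f, σ : [s, T] → ℝ be bounded measurable with σ ≥ 0, and let v : [s, T] → ℝ be continuous satisfying v(t) = 2∫_s^t f(u) v(u) du + c ∫_s^t σ(u)² exp(∫_s^u f(z) dz) du for a constant c ≥ 0. Then v(t) = c ∫_s^t σ(u)² exp(∫_s^u f(z) dz + 2∫_u^t f(z) dz) du. -/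
open MeasureTheory intervalIntegral Set Filter Topology Nat

private lemma my_integrableOn_of_bound {g : ℝ → ℝ} {s : Set ℝ} (hs : MeasurableSet s)
    (hμ : volume s < ⊤) (hmeas : AEStronglyMeasurable g (volume.restrict s)) {M : ℝ}
    (hbd : ∀ u ∈ s, |g u| ≤ M) : IntegrableOn g s := by
  apply Integrable.mono' (integrableOn_const hμ.ne) hmeas
  rw [ae_restrict_iff' hs]
  exact ae_of_all _ fun x hx => by simpa [Real.norm_eq_abs] using hbd x hx

private lemma my_intervalIntegrable {g : ℝ → ℝ} (hmeas : Measurable g) {M : ℝ}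
    (hbd : ∀ u, |g u| ≤ M) (a b : ℝ) : IntervalIntegrable g volume a b := by
  rw [intervalIntegrable_iff]
  exact my_integrableOn_of_bound measurableSet_uIoc
    (by rw [Set.uIoc]; exact measure_Ioc_lt_top) hmeas.aestronglyMeasurable.restrict
    (fun u _ => hbd u)

private lemma my_intervalIntegrable_mul_cont {g : ℝ → ℝ} (hmeas : Measurable g) {M : ℝ}
    (hbd : ∀ u, |g u| ≤ M) {h : ℝ → ℝ} (hh : Continuous h) (a b : ℝ) :
    IntervalIntegrable (fun u => g u * h u) volume a b := by
  rw [intervalIntegrable_iff]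
  obtain ⟨C, hC⟩ := (isCompact_uIcc (a := a) (b := b)).exists_bound_of_continuousOn
    hh.continuousOn
  refine my_integrableOn_of_bound measurableSet_uIoc
    (by rw [Set.uIoc]; exact measure_Ioc_lt_top)
    ((hmeas.mul hh.measurable).aestronglyMeasurable.restrict)
    (M := M * C) (fun u hu => ?_)
  rw [abs_mul]
  have h1 : |h u| ≤ C := by simpa [Real.norm_eq_abs] using hC u (Set.uIoc_subset_uIcc hu)
  exact mul_le_mul (hbd u) h1 (abs_nonneg _) ((abs_nonneg _).trans (hbd u))

private lemma triangle_fubini {a b : ℝ} (hab : a ≤ b) {Af Bf : ℝ → ℝ}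
    (hAf : Measurable Af) (hBf : Measurable Bf) {C : ℝ}
    (hAfb : ∀ u ∈ Set.Icc a b, |Af u| ≤ C) (hBfb : ∀ u ∈ Set.Icc a b, |Bf u| ≤ C) :
    (∫ u in a..b, Af u * ∫ x in a..u, Bf x) = ∫ x in a..b, Bf x * ∫ u in x..b, Af u := by
  classical
  set K : ℝ × ℝ → ℝ := fun p => if p.2 ≤ p.1 then Af p.1 * Bf p.2 else 0 with hKdef
  have hKmeas : Measurable K :=
    Measurable.ite (measurableSet_le measurable_snd measurable_fst)
      ((hAf.comp measurable_fst).mul (hBf.comp measurable_snd)) measurable_const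
  have hC : 0 ≤ C := (abs_nonneg _).trans (hAfb a ⟨le_refl a, hab⟩)
  have hint : Integrable (Function.uncurry fun u x => K (u, x))
      ((volume.restrict (Set.Ioc a b)).prod (volume.restrict (Set.Ioc a b))) := by
    rw [Measure.prod_restrict]
    refine Integrable.mono' (g := fun _ => C * C)
      (integrableOn_const (lt_top_iff_ne_top.1 ?_)) hKmeas.aestronglyMeasurable.restrict ?_
    · rw [Measure.prod_prod]
      exact ENNReal.mul_lt_top measure_Ioc_lt_top measure_Ioc_lt_top
    · rw [ae_restrict_iff' (measurableSet_Ioc.prod measurableSet_Ioc)]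
      refine ae_of_all _ fun p hp => ?_
      have h1 : p.1 ∈ Set.Icc a b := Set.Ioc_subset_Icc_self hp.1
      have h2 : p.2 ∈ Set.Icc a b := Set.Ioc_subset_Icc_self hp.2
      simp only [Function.uncurry, Real.norm_eq_abs, hKdef]
      by_cases hpc : p.2 ≤ p.1
      · rw [if_pos hpc, abs_mul]
        exact mul_le_mul (hAfb _ h1) (hBfb _ h2) (abs_nonneg _) ((abs_nonneg _).trans (hAfb _ h1))
      · rw [if_neg hpc, abs_zero]
        exact mul_nonneg hC hC
  rw [integral_of_le hab, integral_of_le hab]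
  have hleft : ∀ u ∈ Set.Ioc a b,
      Af u * (∫ x in a..u, Bf x) = ∫ x in Set.Ioc a b, K (u, x) := by
    intro u hu
    have : ∀ x, K (u, x) = Af u * (Set.Iic u).indicator Bf x := by
      intro x
      simp only [hKdef, Set.indicator_apply, Set.mem_Iic, mul_ite, mul_zero]
    simp only [this]
    rw [MeasureTheory.integral_const_mul, setIntegral_indicator measurableSet_Iic]
    have : Set.Ioc a b ∩ Set.Iic u = Set.Ioc a u := by
      rw [Set.Ioc_inter_Iic, min_eq_right hu.2]
    rw [this, integral_of_le hu.1.le]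
  have hright : ∀ x ∈ Set.Ioc a b,
      (∫ u in Set.Ioc a b, K (u, x)) = Bf x * ∫ u in x..b, Af u := by
    intro x hx
    have : ∀ u, K (u, x) = (Set.Ici x).indicator Af u * Bf x := by
      intro u
      simp only [hKdef, Set.indicator_apply, Set.mem_Ici, ite_mul, zero_mul]
    simp only [this]
    rw [MeasureTheory.integral_mul_const, setIntegral_indicator measurableSet_Ici]
    have : Set.Ioc a b ∩ Set.Ici x = Set.Icc x b := by
      ext u
      simp only [Set.mem_inter_iff, Set.mem_Ioc, Set.mem_Ici, Set.mem_Icc]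
      constructor
      · rintro ⟨⟨_, hub⟩, hxu⟩; exact ⟨hxu, hub⟩
      · rintro ⟨hxu, hub⟩; exact ⟨⟨lt_of_lt_of_le hx.1 hxu, hub⟩, hxu⟩
    rw [this, integral_Icc_eq_integral_Ioc, integral_of_le hx.2, mul_comm]
  rw [setIntegral_congr_fun measurableSet_Ioc hleft,
    ← setIntegral_congr_fun measurableSet_Ioc hright]
  exact integral_integral_swap hint

private lemma pow_integral_identity {f : ℝ → ℝ} (hf : Measurable f) {M : ℝ}
    (hfb : ∀ u, |f u| ≤ M) :
    ∀ (n : ℕ) (a b : ℝ), a ≤ b →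
      (∫ u in a..b, f u * (∫ z in a..u, f z) ^ n)
        = (∫ z in a..b, f z) ^ (n + 1) / (n + 1) := by
  intro n
  induction n with
  | zero => intro a b _; simp
  | succ n ih =>
    intro a b hab
    set G : ℝ → ℝ := fun u => ∫ z in a..u, f z with hGdef
    have hGcont : Continuous G :=
      intervalIntegral.continuous_primitive (fun c d => my_intervalIntegrable hf hfb c d) a
    have hGncont : Continuous fun u => G u ^ n := hGcont.pow n
    have hφmeas : Measurable fun u => f u * G u ^ n := hf.mul hGncont.measurable
    obtain ⟨C0, hC0⟩ := (isCompact_Icc (a := a) (b := b)).exists_bound_of_continuousOn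
      hGncont.continuousOn
    have hM : 0 ≤ M := (abs_nonneg _).trans (hfb 0)
    have hC0n : 0 ≤ C0 := (norm_nonneg _).trans (hC0 a ⟨le_refl a, hab⟩)
    set C : ℝ := M * C0 + M + 1 with hCdef
    have hφb : ∀ u ∈ Set.Icc a b, |f u * G u ^ n| ≤ C := by
      intro u hu
      rw [abs_mul]
      have h1 : |G u ^ n| ≤ C0 := by simpa [Real.norm_eq_abs] using hC0 u hu
      nlinarith [hfb u, abs_nonneg (f u), abs_nonneg (G u ^ n)]
    have hψb : ∀ u ∈ Set.Icc a b, |f u| ≤ C := by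
      intro u _
      nlinarith [hfb u, abs_nonneg (f u)]
    set J : ℝ := ∫ u in a..b, f u * G u ^ (n + 1) with hJdef
    have hintf : ∀ c d : ℝ, IntervalIntegrable f volume c d := my_intervalIntegrable hf hfb
    have hintφ : ∀ c d : ℝ, IntervalIntegrable (fun u => f u * G u ^ n) volume c d :=
      my_intervalIntegrable_mul_cont hf hfb hGncont
    have hintφ1 : ∀ c d : ℝ, IntervalIntegrable (fun u => f u * G u ^ (n + 1)) volume c d :=
      my_intervalIntegrable_mul_cont hf hfb (hGcont.pow (n + 1))
    have step1 : J = ∫ u in a..b, (fun w => f w * G w ^ n) u * ∫ z in a..u, f z := by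
      rw [hJdef]
      refine integral_congr fun u _ => ?_
      show f u * G u ^ (n + 1) = f u * G u ^ n * G u
      rw [pow_succ]; ring
    have step2 : J = ∫ x in a..b, f x * ∫ u in x..b, f u * G u ^ n := by
      rw [step1, triangle_fubini hab hφmeas hf hφb hψb]
    have step3 : J = ∫ x in a..b, (G b ^ (n + 1) / (n + 1) * f x
        - (1 / (n + 1)) * (f x * G x ^ (n + 1))) := by
      rw [step2]
      refine integral_congr fun x hx => ?_
      rw [Set.uIcc_of_le hab] at hx
      have hinner : (∫ u in x..b, f u * G u ^ n)
          = G b ^ (n + 1) / (n + 1) - G x ^ (n + 1) / (n + 1) := by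
        rw [← integral_interval_sub_left (hintφ a b) (hintφ a x), ih a b hab, ih a x hx.1]
      rw [hinner]
      ring
    have step4 : J = G b ^ (n + 1) / (n + 1) * G b - (1 / (n + 1)) * J := by
      conv_lhs => rw [step3]
      rw [integral_sub ((hintf a b).const_mul _) ((hintφ1 a b).const_mul _),
        intervalIntegral.integral_const_mul, intervalIntegral.integral_const_mul]
    have hne : (n : ℝ) + 1 ≠ 0 := by positivity
    have hGb : (∫ z in a..b, f z) = G b := rfl
    rw [hGb]
    show J = G b ^ (n + 1 + 1) / (↑(n + 1) + 1)
    push_cast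
    push_cast at step4
    field_simp at step4 ⊢
    nlinarith [step4, pow_succ (G b) (n + 1)]

private lemma exp_partial_sums (x : ℝ) :
    Tendsto (fun N => ∑ k ∈ Finset.range N, x ^ k / k !) atTop (𝓝 (Real.exp x)) := by
  have h : HasSum (fun n : ℕ => x ^ n / n !) (Real.exp x) := by
    rw [Real.exp_eq_exp_ℝ]
    exact NormedSpace.expSeries_div_hasSum_exp x
  exact h.tendsto_sum_nat

private lemma exp_integral_identity {f : ℝ → ℝ} (hf : Measurable f) {M : ℝ}
    (hfb : ∀ u, |f u| ≤ M) {a b : ℝ} (hab : a ≤ b) :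
    (∫ u in a..b, f u * Real.exp (2 * ∫ z in a..u, f z))
      = (Real.exp (2 * ∫ z in a..b, f z) - 1) / 2 := by
  set G : ℝ → ℝ := fun u => ∫ z in a..u, f z with hGdef
  have hGcont : Continuous G :=
    intervalIntegral.continuous_primitive (fun c d => my_intervalIntegrable hf hfb c d) a
  obtain ⟨C, hC⟩ := (isCompact_Icc (a := a) (b := b)).exists_bound_of_continuousOn
    hGcont.continuousOn
  have hM : 0 ≤ M := (abs_nonneg _).trans (hfb 0)
  -- the partial sums of the integrals
  have key : ∀ N : ℕ, (∫ u in a..b, f u * ∑ k ∈ Finset.range N, (2 * G u) ^ k / k !)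
      = ∑ k ∈ Finset.range N, (2 * G b) ^ (k + 1) / (k + 1)! / 2 := by
    intro N
    have h1 : (∫ u in a..b, f u * ∑ k ∈ Finset.range N, (2 * G u) ^ k / k !)
        = ∑ k ∈ Finset.range N, ∫ u in a..b, (2 ^ k / k !) * (f u * G u ^ k) := by
      rw [← intervalIntegral.integral_finset_sum]
      · refine integral_congr fun u _ => ?_
        rw [Finset.mul_sum]
        refine Finset.sum_congr rfl fun k _ => ?_
        rw [mul_pow]
        ring
      · intro k _
        exact (my_intervalIntegrable_mul_cont hf hfb (hGcont.pow k) a b).const_mul _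
    rw [h1]
    refine Finset.sum_congr rfl fun k _ => ?_
    rw [intervalIntegral.integral_const_mul]
    have h2 : (∫ u in a..b, f u * G u ^ k) = G b ^ (k + 1) / (k + 1) :=
      pow_integral_identity hf hfb k a b hab
    rw [h2, mul_pow, Nat.factorial_succ]
    have hk : (k : ℝ) + 1 ≠ 0 := by positivity
    have hkf : (k ! : ℝ) ≠ 0 := Nat.cast_ne_zero.2 (Nat.factorial_ne_zero k)
    push_cast
    field_simp
    ring
  -- convergence of the right-hand side
  have hrhs : Tendsto (fun N => ∑ k ∈ Finset.range N, (2 * G b) ^ (k + 1) / (k + 1)! / 2)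
      atTop (𝓝 ((Real.exp (2 * G b) - 1) / 2)) := by
    have h3 : ∀ N : ℕ, (∑ k ∈ Finset.range N, (2 * G b) ^ (k + 1) / (k + 1)! / 2)
        = ((∑ k ∈ Finset.range (N + 1), (2 * G b) ^ k / k !) - 1) / 2 := by
      intro N
      rw [Finset.sum_range_succ' (fun k => (2 * G b) ^ k / (k ! : ℝ)) N]
      simp [Finset.sum_div]
    simp only [h3]
    exact (((exp_partial_sums (2 * G b)).comp (tendsto_add_atTop_nat 1)).sub
      tendsto_const_nhds).div_const 2
  -- convergence of the left-hand side by dominated convergence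
  have hlhs : Tendsto (fun N => ∫ u in a..b, f u * ∑ k ∈ Finset.range N, (2 * G u) ^ k / k !)
      atTop (𝓝 (∫ u in a..b, f u * Real.exp (2 * G u))) := by
    refine intervalIntegral.tendsto_integral_filter_of_dominated_convergence
      (fun _ => M * Real.exp (2 * |C|)) ?_ ?_ ?_ ?_
    · refine Eventually.of_forall fun N => ?_
      have : Measurable fun u => f u * ∑ k ∈ Finset.range N, (2 * G u) ^ k / k ! := by
        apply hf.mul
        exact (Finset.measurable_sum _ fun k _ =>
          ((hGcont.measurable.const_mul 2).pow_const k).div_const _)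
      exact this.aestronglyMeasurable
    · refine Eventually.of_forall fun N => ae_of_all _ fun u hu => ?_
      have huIcc : u ∈ Set.Icc a b := by
        rw [Set.uIoc_of_le hab] at hu
        exact Set.Ioc_subset_Icc_self hu
      have hGu : |2 * G u| ≤ 2 * |C| := by
        rw [abs_mul, abs_two]
        have h := hC u huIcc
        rw [Real.norm_eq_abs] at h
        have h2 : |G u| ≤ |C| := h.trans (le_abs_self C)
        linarith
      have hsum : |∑ k ∈ Finset.range N, (2 * G u) ^ k / k !| ≤ Real.exp (2 * |C|) := by
        calc |∑ k ∈ Finset.range N, (2 * G u) ^ k / k !|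
            ≤ ∑ k ∈ Finset.range N, |(2 * G u) ^ k / k !| := Finset.abs_sum_le_sum_abs _ _
          _ = ∑ k ∈ Finset.range N, |2 * G u| ^ k / k ! := by
              refine Finset.sum_congr rfl fun k _ => ?_
              rw [abs_div, abs_pow, Nat.abs_cast]
          _ ≤ Real.exp |2 * G u| := Real.sum_le_exp_of_nonneg (abs_nonneg _) N
          _ ≤ Real.exp (2 * |C|) := Real.exp_le_exp.2 hGu
      rw [Real.norm_eq_abs, abs_mul]
      exact mul_le_mul (hfb u) hsum (abs_nonneg _) hM
    · exact intervalIntegrable_const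
    · refine ae_of_all _ fun u _ => ?_
      exact (exp_partial_sums (2 * G u)).const_mul (f u) |>.congr (fun N => rfl) |>.mono_right
        (le_refl _) |>.congr' (Eventually.of_forall fun N => by ring_nf) |>.mono_right (le_refl _)
  simp only [key] at hlhs
  exact tendsto_nhds_unique hlhs hrhs

private lemma my_gronwall_zero {s T : ℝ} {g d : ℝ → ℝ} (hg : Measurable g) {L : ℝ}
    (hgb : ∀ u, |g u| ≤ L) (hd : ContinuousOn d (Set.Icc s T))
    (heq : ∀ t ∈ Set.Icc s T, d t = ∫ u in s..t, g u * d u) :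
    ∀ t ∈ Set.Icc s T, d t = 0 := by
  intro t ht
  have hsT : s ≤ T := ht.1.trans ht.2
  obtain ⟨K, hK⟩ := (isCompact_Icc (a := s) (b := T)).exists_bound_of_continuousOn hd
  have hL : 0 ≤ L := (abs_nonneg _).trans (hgb 0)
  have hK0 : 0 ≤ K := (norm_nonneg _).trans (hK s ⟨le_refl s, hsT⟩)
  -- integrability of g * d on [s, x] for x ∈ [s, T]
  have hint : ∀ x ∈ Set.Icc s T, IntervalIntegrable (fun u => g u * d u) volume s x := by
    intro x hx
    rw [intervalIntegrable_iff, Set.uIoc_of_le hx.1]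
    have hdm : AEStronglyMeasurable d (volume.restrict (Set.Ioc s x)) := by
      refine ContinuousOn.aestronglyMeasurable ?_ measurableSet_Ioc
      exact hd.mono fun u hu => ⟨hu.1.le, hu.2.trans hx.2⟩
    refine my_integrableOn_of_bound measurableSet_Ioc measure_Ioc_lt_top
      (M := L * K) ((hg.aemeasurable.restrict.aestronglyMeasurable).mul hdm) fun u hu => ?_
    rw [abs_mul]
    have hud : |d u| ≤ K := by
      have := hK u ⟨hu.1.le, hu.2.trans hx.2⟩
      rwa [Real.norm_eq_abs] at this
    exact mul_le_mul (hgb u) hud (abs_nonneg _) hL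
  have main : ∀ n : ℕ, ∀ x ∈ Set.Icc s T, |d x| ≤ K * (L * (x - s)) ^ n / n ! := by
    intro n
    induction n with
    | zero =>
      intro x hx
      simpa [Real.norm_eq_abs] using hK x hx
    | succ n ih =>
      intro x hx
      rw [heq x hx]
      have h1 : |∫ u in s..x, g u * d u| ≤ ∫ u in s..x, |g u * d u| :=
        intervalIntegral.abs_integral_le_integral_abs hx.1
      have h2 : (∫ u in s..x, |g u * d u|)
          ≤ ∫ u in s..x, (L ^ (n + 1) * K / n !) * (u - s) ^ n := by
        refine intervalIntegral.integral_mono_on hx.1 (hint x hx).abs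
          ((continuous_const.mul ((continuous_id.sub continuous_const).pow n)).intervalIntegrable
            s x) fun u hu => ?_
        have huT : u ∈ Set.Icc s T := ⟨hu.1, hu.2.trans hx.2⟩
        have := ih u huT
        rw [abs_mul]
        calc |g u| * |d u| ≤ L * (K * (L * (u - s)) ^ n / n !) :=
              mul_le_mul (hgb u) this (abs_nonneg _) hL
          _ = L ^ (n + 1) * K / n ! * (u - s) ^ n := by
              rw [mul_pow, pow_succ]; ring
      have h3 : (∫ u in s..x, (L ^ (n + 1) * K / n !) * (u - s) ^ n)
          = K * (L * (x - s)) ^ (n + 1) / (n + 1)! := by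
        rw [intervalIntegral.integral_const_mul]
        have h4 : (∫ u in s..x, (u - s) ^ n) = (x - s) ^ (n + 1) / (n + 1) := by
          rw [show (fun u : ℝ => (u - s) ^ n) = fun u => (fun z : ℝ => z ^ n) (u - s) from rfl,
            intervalIntegral.integral_comp_sub_right (fun z : ℝ => z ^ n) s]
          simp [integral_pow]
        rw [h4, mul_pow, Nat.factorial_succ]
        have hne : ((n ! : ℝ)) ≠ 0 := Nat.cast_ne_zero.2 (Nat.factorial_ne_zero n)
        have hne2 : (n : ℝ) + 1 ≠ 0 := by positivity
        push_cast
        field_simp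
      calc |∫ u in s..x, g u * d u| ≤ ∫ u in s..x, |g u * d u| := h1
        _ ≤ ∫ u in s..x, (L ^ (n + 1) * K / n !) * (u - s) ^ n := h2
        _ = K * (L * (x - s)) ^ (n + 1) / (n + 1)! := h3
  have hlim : Tendsto (fun n : ℕ => K * (L * (t - s)) ^ n / n !) atTop (𝓝 0) := by
    have h := FloorSemiring.tendsto_pow_div_factorial_atTop (K := ℝ) (L * (t - s))
    have := h.const_mul K
    simpa [mul_div_assoc] using this
  have habs : |d t| ≤ 0 :=
    ge_of_tendsto hlim (Eventually.of_forall fun n => main n t ht)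
  exact abs_eq_zero.1 (le_antisymm habs (abs_nonneg _))

private lemma expF_integral {f : ℝ → ℝ} (hf : Measurable f) {M : ℝ}
    (hfb : ∀ u, |f u| ≤ M) (s : ℝ) {x t : ℝ} (hxt : x ≤ t) :
    (∫ u in x..t, f u * Real.exp (2 * ∫ z in s..u, f z))
      = (Real.exp (2 * ∫ z in s..t, f z) - Real.exp (2 * ∫ z in s..x, f z)) / 2 := by
  have hii : ∀ c d : ℝ, IntervalIntegrable f volume c d := my_intervalIntegrable hf hfb
  have hsplit : ∀ u : ℝ, (∫ z in s..u, f z) = (∫ z in s..x, f z) + ∫ z in x..u, f z := fun u =>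
    (intervalIntegral.integral_add_adjacent_intervals (hii s x) (hii x u)).symm
  have h1 : (∫ u in x..t, f u * Real.exp (2 * ∫ z in s..u, f z))
      = ∫ u in x..t,
          Real.exp (2 * ∫ z in s..x, f z) * (f u * Real.exp (2 * ∫ z in x..u, f z)) := by
    refine integral_congr fun u _ => ?_
    rw [hsplit u, mul_add, Real.exp_add]
    ring
  rw [h1, intervalIntegral.integral_const_mul, exp_integral_identity hf hfb hxt, hsplit t,
    mul_add, Real.exp_add]
  ring

/-- the linear non-homogeneous integral equation for the conditional
variance: if `v(t) = 2∫_s^t f(u) v(u) du + c ∫_s^t σ(u)² exp(∫_s^u f(z) dz) du`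
with `f, σ` bounded measurable, `σ ≥ 0`, `v` continuous and `c ≥ 0`, then
`v(t) = c ∫_s^t σ(u)² exp(∫_s^u f(z) dz + 2∫_u^t f(z) dz) du`. -/
theorem variance_integral_equation_solution
    (s T c : ℝ) (hc : 0 ≤ c) (f σ v : ℝ → ℝ)
    (hf_meas : Measurable f) (hf_bdd : ∃ M, ∀ u, |f u| ≤ M)
    (hσ_meas : Measurable σ) (hσ_bdd : ∃ M, ∀ u, |σ u| ≤ M)
    (hσ_nonneg : ∀ u ∈ Set.Icc s T, 0 ≤ σ u)
    (hv_cont : ContinuousOn v (Set.Icc s T))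
    (heq : ∀ t ∈ Set.Icc s T,
      v t = 2 * (∫ u in s..t, f u * v u) +
        c * ∫ u in s..t, (σ u) ^ 2 * Real.exp (∫ z in s..u, f z)) :
    ∀ t ∈ Set.Icc s T,
      v t = c * ∫ u in s..t,
        (σ u) ^ 2 * Real.exp ((∫ z in s..u, f z) + 2 * ∫ z in u..t, f z) := by
  obtain ⟨M, hfM⟩ := hf_bdd
  obtain ⟨Mσ, hσM⟩ := hσ_bdd
  have hM0 : 0 ≤ M := (abs_nonneg _).trans (hfM 0)
  have hii : ∀ a b : ℝ, IntervalIntegrable f volume a b := my_intervalIntegrable hf_meas hfM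
  have hFcont : Continuous fun u : ℝ => ∫ z in s..u, f z :=
    intervalIntegral.continuous_primitive hii s
  have hEneg : Continuous fun u : ℝ => Real.exp (-∫ z in s..u, f z) :=
    Real.continuous_exp.comp hFcont.neg
  have hE2 : Continuous fun u : ℝ => Real.exp (2 * ∫ z in s..u, f z) :=
    Real.continuous_exp.comp (continuous_const.mul hFcont)
  have hE1 : Continuous fun u : ℝ => Real.exp (∫ z in s..u, f z) :=
    Real.continuous_exp.comp hFcont
  have hσ2meas : Measurable fun u => σ u ^ 2 := hσ_meas.pow_const 2
  have hσ2b : ∀ u, |σ u ^ 2| ≤ Mσ ^ 2 := fun u => by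
    rw [abs_pow]
    exact pow_le_pow_left₀ (abs_nonneg _) (hσM u) 2
  have hMσ0 : 0 ≤ Mσ ^ 2 := (abs_nonneg _).trans (hσ2b 0)
  have hψint : ∀ a b : ℝ, IntervalIntegrable
      (fun u => σ u ^ 2 * Real.exp (-∫ z in s..u, f z)) volume a b :=
    my_intervalIntegrable_mul_cont hσ2meas hσ2b hEneg
  have hψ1int : ∀ a b : ℝ, IntervalIntegrable
      (fun u => σ u ^ 2 * Real.exp (∫ z in s..u, f z)) volume a b :=
    my_intervalIntegrable_mul_cont hσ2meas hσ2b hE1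
  have hWcont : Continuous fun u : ℝ => ∫ x in s..u, σ x ^ 2 * Real.exp (-∫ z in s..x, f z) :=
    intervalIntegral.continuous_primitive hψint s
  obtain ⟨C1, hC1⟩ := (isCompact_Icc (a := s) (b := T)).exists_bound_of_continuousOn
    hE2.continuousOn
  obtain ⟨C2, hC2⟩ := (isCompact_Icc (a := s) (b := T)).exists_bound_of_continuousOn
    hEneg.continuousOn
  -- the key identity coming from Fubini's theorem
  have hstar : ∀ t ∈ Set.Icc s T,
      Real.exp (2 * ∫ z in s..t, f z)
          * (∫ x in s..t, σ x ^ 2 * Real.exp (-∫ z in s..x, f z))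
        = (∫ u in s..t, σ u ^ 2 * Real.exp (∫ z in s..u, f z))
          + 2 * ∫ u in s..t, (f u * Real.exp (2 * ∫ z in s..u, f z))
              * ∫ x in s..u, σ x ^ 2 * Real.exp (-∫ z in s..x, f z) := by
    intro t ht
    have hst : s ≤ t := ht.1
    have hsub : Set.Icc s t ⊆ Set.Icc s T := Set.Icc_subset_Icc le_rfl ht.2
    have hAmeas : Measurable fun u => f u * Real.exp (2 * ∫ z in s..u, f z) :=
      hf_meas.mul hE2.measurable
    have hBmeas : Measurable fun x => σ x ^ 2 * Real.exp (-∫ z in s..x, f z) :=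
      hσ2meas.mul hEneg.measurable
    set C : ℝ := max (M * C1) (Mσ ^ 2 * C2) with hCdef
    have hAb : ∀ u ∈ Set.Icc s t, |f u * Real.exp (2 * ∫ z in s..u, f z)| ≤ C := by
      intro u hu
      rw [abs_mul]
      have h1 := hC1 u (hsub hu)
      rw [Real.norm_eq_abs] at h1
      exact le_trans (mul_le_mul (hfM u) h1 (abs_nonneg _) hM0) (le_max_left _ _)
    have hBb : ∀ u ∈ Set.Icc s t, |σ u ^ 2 * Real.exp (-∫ z in s..u, f z)| ≤ C := by
      intro u hu
      rw [abs_mul]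
      have h2 := hC2 u (hsub hu)
      rw [Real.norm_eq_abs] at h2
      exact le_trans (mul_le_mul (hσ2b u) h2 (abs_nonneg _) hMσ0) (le_max_right _ _)
    have fub := triangle_fubini hst hAmeas hBmeas hAb hBb
    have hRHS : (∫ x in s..t, (σ x ^ 2 * Real.exp (-∫ z in s..x, f z))
            * ∫ u in x..t, f u * Real.exp (2 * ∫ z in s..u, f z))
        = ∫ x in s..t,
            ((Real.exp (2 * ∫ z in s..t, f z) / 2)
                * (σ x ^ 2 * Real.exp (-∫ z in s..x, f z))
              - (1 / 2) * (σ x ^ 2 * Real.exp (∫ z in s..x, f z))) := by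
      refine integral_congr fun x hx => ?_
      rw [Set.uIcc_of_le hst] at hx
      rw [expF_integral hf_meas hfM s hx.2]
      have hxe : Real.exp (-∫ z in s..x, f z) * Real.exp (2 * ∫ z in s..x, f z)
          = Real.exp (∫ z in s..x, f z) := by
        rw [← Real.exp_add]
        ring_nf
      linear_combination (-(σ x ^ 2) / 2) * hxe
    have hsplitInt : (∫ x in s..t,
            ((Real.exp (2 * ∫ z in s..t, f z) / 2)
                * (σ x ^ 2 * Real.exp (-∫ z in s..x, f z))
              - (1 / 2) * (σ x ^ 2 * Real.exp (∫ z in s..x, f z))))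
        = (Real.exp (2 * ∫ z in s..t, f z) / 2)
            * (∫ x in s..t, σ x ^ 2 * Real.exp (-∫ z in s..x, f z))
          - (1 / 2) * ∫ x in s..t, σ x ^ 2 * Real.exp (∫ z in s..x, f z) := by
      rw [integral_sub ((hψint s t).const_mul _) ((hψ1int s t).const_mul _),
        intervalIntegral.integral_const_mul, intervalIntegral.integral_const_mul]
    rw [hRHS, hsplitInt] at fub
    linarith [fub]
  -- Gronwall: the difference of v and the candidate solution vanishes
  have hVcont : Continuous fun u : ℝ =>
      c * (Real.exp (2 * ∫ z in s..u, f z)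
        * ∫ x in s..u, σ x ^ 2 * Real.exp (-∫ z in s..x, f z)) :=
    continuous_const.mul (hE2.mul hWcont)
  have hdzero : ∀ t ∈ Set.Icc s T,
      v t - c * (Real.exp (2 * ∫ z in s..t, f z)
        * ∫ x in s..t, σ x ^ 2 * Real.exp (-∫ z in s..x, f z)) = 0 := by
    obtain ⟨Kv, hKv⟩ := (isCompact_Icc (a := s) (b := T)).exists_bound_of_continuousOn hv_cont
    refine my_gronwall_zero (g := fun u => 2 * f u) (L := 2 * M)
      (hf_meas.const_mul 2)
      (fun u => by rw [abs_mul, abs_two]; exact mul_le_mul_of_nonneg_left (hfM u) (by norm_num))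
      (hv_cont.sub hVcont.continuousOn) ?_
    intro t ht
    have hst : s ≤ t := ht.1
    have hfv : IntervalIntegrable (fun u => f u * v u) volume s t := by
      rw [intervalIntegrable_iff, Set.uIoc_of_le hst]
      have hdm : AEStronglyMeasurable v (volume.restrict (Set.Ioc s t)) := by
        refine ContinuousOn.aestronglyMeasurable ?_ measurableSet_Ioc
        exact hv_cont.mono fun u hu => ⟨hu.1.le, hu.2.trans ht.2⟩
      refine my_integrableOn_of_bound measurableSet_Ioc measure_Ioc_lt_top
        (M := M * Kv) ((hf_meas.aemeasurable.restrict.aestronglyMeasurable).mul hdm)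
        fun u hu => ?_
      rw [abs_mul]
      have hud : |v u| ≤ Kv := by
        have := hKv u ⟨hu.1.le, hu.2.trans ht.2⟩
        rwa [Real.norm_eq_abs] at this
      exact mul_le_mul (hfM u) hud (abs_nonneg _) hM0
    have hfV : IntervalIntegrable (fun u => f u
        * (c * (Real.exp (2 * ∫ z in s..u, f z)
            * ∫ x in s..u, σ x ^ 2 * Real.exp (-∫ z in s..x, f z)))) volume s t :=
      my_intervalIntegrable_mul_cont hf_meas hfM (continuous_const.mul (hE2.mul hWcont)) s t
    have hVt : c * (Real.exp (2 * ∫ z in s..t, f z)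
          * ∫ x in s..t, σ x ^ 2 * Real.exp (-∫ z in s..x, f z))
        = c * (∫ u in s..t, σ u ^ 2 * Real.exp (∫ z in s..u, f z))
          + 2 * ∫ u in s..t, f u * (c * (Real.exp (2 * ∫ z in s..u, f z)
              * ∫ x in s..u, σ x ^ 2 * Real.exp (-∫ z in s..x, f z))) := by
      rw [hstar t ht]
      rw [mul_add]
      have : (∫ u in s..t, f u * (c * (Real.exp (2 * ∫ z in s..u, f z)
              * ∫ x in s..u, σ x ^ 2 * Real.exp (-∫ z in s..x, f z))))
          = c * ∫ u in s..t, (f u * Real.exp (2 * ∫ z in s..u, f z))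
              * ∫ x in s..u, σ x ^ 2 * Real.exp (-∫ z in s..x, f z) := by
        rw [← intervalIntegral.integral_const_mul]
        exact integral_congr fun u _ => by ring
      rw [this]
      ring
    have hsum : (∫ u in s..t, (2 * f u) * (v u
          - c * (Real.exp (2 * ∫ z in s..u, f z)
              * ∫ x in s..u, σ x ^ 2 * Real.exp (-∫ z in s..x, f z))))
        = 2 * (∫ u in s..t, f u * v u)
          - 2 * ∫ u in s..t, f u * (c * (Real.exp (2 * ∫ z in s..u, f z)
              * ∫ x in s..u, σ x ^ 2 * Real.exp (-∫ z in s..x, f z))) := by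
      have : (∫ u in s..t, (2 * f u) * (v u
            - c * (Real.exp (2 * ∫ z in s..u, f z)
                * ∫ x in s..u, σ x ^ 2 * Real.exp (-∫ z in s..x, f z))))
          = ∫ u in s..t, (2 * (f u * v u)
              - 2 * (f u * (c * (Real.exp (2 * ∫ z in s..u, f z)
                * ∫ x in s..u, σ x ^ 2 * Real.exp (-∫ z in s..x, f z))))) :=
        integral_congr fun u _ => by ring
      rw [this, integral_sub ((hfv).const_mul 2) ((hfV).const_mul 2),
        intervalIntegral.integral_const_mul, intervalIntegral.integral_const_mul]
    have hveq := heq t ht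
    linarith [hveq, hVt, hsum]
  -- conclusion
  intro t ht
  have hd := hdzero t ht
  have htarget : (∫ u in s..t,
        σ u ^ 2 * Real.exp ((∫ z in s..u, f z) + 2 * ∫ z in u..t, f z))
      = Real.exp (2 * ∫ z in s..t, f z)
          * ∫ x in s..t, σ x ^ 2 * Real.exp (-∫ z in s..x, f z) := by
    rw [← intervalIntegral.integral_const_mul]
    refine integral_congr fun u _ => ?_
    have hsubint : (∫ z in u..t, f z) = (∫ z in s..t, f z) - ∫ z in s..u, f z :=
      (integral_interval_sub_left (hii s t) (hii s u)).symm
    rw [hsubint, show (∫ z in s..u, f z) + 2 * ((∫ z in s..t, f z) - ∫ z in s..u, f z)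
        = 2 * (∫ z in s..t, f z) + -(∫ z in s..u, f z) by ring, Real.exp_add]
    ring
  rw [htarget]
  linarith [hd]
end
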